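/- Let ℓ² = ℓ²(ℕ;ℂ), let M ≥ 1 be an integer, and for each u ∈ ℕ let d(u) = (d(u)_1, …, d(u)_M) be an M-tuple of vectors in ℓ² (an ∞×M matrix with columns d(u)_r), with Σ_{u=0}^∞ ‖d(u)‖_{HS} < ∞ where ‖d(u)‖_{HS} := (Σ_{r=1}^M ‖d(u)_r‖²)^{1/2}. Let a : ℕ → ℓ² satisfy Σ_{j=0}^∞ ‖a_j‖ < ∞ and Σ_{j=0}^∞ (j+1)‖a_j‖² < ∞, and set A(λ) = Σ_{j=0}^∞ a_j e^{ijλ}. For x ∈ ℓ² let d(u)ᵀx ∈ ℂ^M be given by (d(u)ᵀx)_r = Σ_{k∈ℕ} (d(u)_r)_k·x_k, and define s_t := Σ_{p=0}^∞ d(p)ᵀ a_{p+t} ∈ ℂ^M for t ≥ 0 (all these series converge absolutely and Σ_{t=0}^∞ ‖s_t‖² < ∞). Then for every negative-frequency function h : [−π,π) → ℓ², (1/2π)·∫_{−π}^{π} ‖ Σ_{u=0}^∞ e^{−iuλ}·d(u)ᵀ(A(λ)−h(λ)) ‖²_{ℂ^M} dλ ≥ Σ_{t=0}^∞ ‖s_t‖²_{ℂ^M},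 where the integral is taken with values in [0,∞]. -/

import Mathlib

open MeasureTheory
open scoped ENNReal

noncomputable section

/-- The space `ℓ² = ℓ²(ℕ; ℂ)`. -/
abbrev Elltwo : Type := lp (fun _ : ℕ => ℂ) 2

/-- Lebesgue measure restricted to `[-π, π)`. -/
def pmeas : Measure ℝ := volume.restrict (Set.Ico (-Real.pi) Real.pi)

/-- A square-integrable function `h : [-π,π) → ℓ²` is a negative-frequency function if
its Fourier coefficients `∫ h(λ)·e^{-ijλ} dλ` vanish for every integer `j ≥ 0`. -/
def NegFreq (h : ℝ → Elltwo) : Prop :=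
  MemLp h 2 pmeas ∧
  ∀ j : ℤ, 0 ≤ j →
    (∫ l, Complex.exp (-Complex.I * (j : ℂ) * (l : ℂ)) • h l ∂pmeas) = 0

open Complex
open scoped ComplexConjugate InnerProductSpace

section Aux

lemma exp_orth (n : ℤ) :
    (∫ l, Complex.exp (Complex.I * (n : ℂ) * (l : ℂ)) ∂pmeas) =
      if n = 0 then ((2 * Real.pi : ℝ) : ℂ) else 0 := by
  show (∫ l in Set.Ico (-Real.pi) Real.pi, Complex.exp (Complex.I * (n : ℂ) * (l : ℂ))) = _
  have hle : -Real.pi ≤ Real.pi := by linarith [Real.pi_pos]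
  have hIoc : (∫ l in Set.Ico (-Real.pi) Real.pi, Complex.exp (Complex.I * (n : ℂ) * (l : ℂ)))
      = ∫ l in Set.Ioc (-Real.pi) Real.pi, Complex.exp (Complex.I * (n : ℂ) * (l : ℂ)) := by
    rw [MeasureTheory.integral_Ico_eq_integral_Ioo, MeasureTheory.integral_Ioc_eq_integral_Ioo]
  have hint : (∫ l in Set.Ioc (-Real.pi) Real.pi, Complex.exp (Complex.I * (n : ℂ) * (l : ℂ)))
      = ∫ l in (-Real.pi)..Real.pi, Complex.exp (Complex.I * (n : ℂ) * (l : ℂ)) :=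
    (intervalIntegral.integral_of_le hle).symm
  rw [hIoc, hint]
  rcases eq_or_ne n 0 with h | h
  · subst h
    simp only [Int.cast_zero, mul_zero, zero_mul, Complex.exp_zero, if_true]
    rw [intervalIntegral.integral_const]
    push_cast
    ring_nf
    simp [two_mul]
  · have hc : Complex.I * (n : ℂ) ≠ 0 := by
      apply mul_ne_zero Complex.I_ne_zero
      exact_mod_cast h
    have key := integral_exp_mul_complex (a := -Real.pi) (b := Real.pi) hc
    rw [show (∫ l in (-Real.pi)..Real.pi, Complex.exp (Complex.I * (n : ℂ) * (l : ℂ)))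
        = ∫ l in (-Real.pi)..Real.pi, Complex.exp ((Complex.I * (n : ℂ)) * (l : ℂ)) from rfl,
      key, if_neg h]
    have h1 : Complex.exp (Complex.I * (n:ℂ) * (Real.pi:ℂ)) =
        Complex.exp (Complex.I * (n:ℂ) * ((-Real.pi : ℝ):ℂ)) := by
      have : Complex.I * (n:ℂ) * (Real.pi:ℂ)
          = Complex.I * (n:ℂ) * ((-Real.pi : ℝ):ℂ) + (n:ℂ) * (2 * (Real.pi:ℂ) * Complex.I) := by
        push_cast; ring
      rw [this, Complex.exp_add, Complex.exp_int_mul_two_pi_mul_I n, mul_one]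
    rw [h1]
    simp

lemma sq_summ (x : Elltwo) : Summable fun k => ‖x k‖ ^ 2 := by
  have := lp.memℓp x
  rw [memℓp_gen_iff (by norm_num : (0:ℝ) < (2:ℝ≥0∞).toReal)] at this
  refine this.congr (fun k => ?_)
  rw [← Real.rpow_natCast (‖x k‖) 2]
  norm_num

lemma mul_norm_summ (x y : Elltwo) : Summable fun k => ‖x k‖ * ‖y k‖ := by
  refine Summable.of_nonneg_of_le (fun k => by positivity)
    (fun k => ?_) (((sq_summ x).add (sq_summ y)).mul_left (1/2))
  have := sq_nonneg (‖x k‖ - ‖y k‖)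
  nlinarith [norm_nonneg (x k), norm_nonneg (y k)]

local notation "⟪" x ", " y "⟫" => @inner ℂ _ _ x y

lemma inner_star_eq (x y : Elltwo) : ⟪star x, y⟫ = ∑' k, x k * y k := by
  rw [lp.inner_eq_tsum]
  congr 1
  funext k
  rw [lp.star_apply]
  simp [RCLike.inner_apply, mul_comm]

lemma norm_tsum_mul_le (x y : Elltwo) : ‖∑' k, x k * y k‖ ≤ ‖x‖ * ‖y‖ := by
  rw [← inner_star_eq]
  calc ‖⟪star x, y⟫‖ ≤ ‖star x‖ * ‖y‖ := norm_inner_le_norm _ _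
  _ = ‖x‖ * ‖y‖ := by rw [norm_star]

lemma summ_mul (x y : Elltwo) : Summable fun k => x k * y k := by
  refine Summable.of_norm ?_
  exact (mul_norm_summ x y).congr fun k => by rw [norm_mul]

instance pmeas_fin : IsFiniteMeasure pmeas := by
  constructor
  rw [pmeas, Measure.restrict_apply_univ, Real.volume_Ico]
  exact ENNReal.ofReal_lt_top

lemma norm_exp_I_mul (j : ℕ) (l : ℝ) : ‖Complex.exp (Complex.I * (j:ℂ) * (l:ℂ))‖ = 1 := by
  rw [Complex.norm_exp]
  simp [Complex.mul_re]

lemma norm_exp_neg_I_mul (j : ℕ) (l : ℝ) : ‖Complex.exp (-Complex.I * (j:ℂ) * (l:ℂ))‖ = 1 := by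
  rw [Complex.norm_exp]
  simp [Complex.mul_re]

-- A is continuous, given equal to tsum
lemma A_cont (a : ℕ → Elltwo) (ha1 : Summable fun j : ℕ => ‖a j‖) (A : ℝ → Elltwo)
    (hA : ∀ l : ℝ, A l = ∑' j : ℕ, Complex.exp (Complex.I * (j : ℂ) * (l : ℂ)) • a j) :
    Continuous A := by
  have : A = fun l : ℝ => ∑' j : ℕ, Complex.exp (Complex.I * (j : ℂ) * (l : ℂ)) • a j :=
    funext hA
  rw [this]
  refine continuous_tsum (fun j => ?_) ha1 (fun j l => ?_)
  · exact Continuous.smul (by continuity : Continuous fun l : ℝ => Complex.exp (Complex.I * (j : ℂ) * (l : ℂ))) continuous_const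
  · rw [norm_smul, norm_exp_I_mul, one_mul]

lemma A_norm_le (a : ℕ → Elltwo) (ha1 : Summable fun j : ℕ => ‖a j‖) (A : ℝ → Elltwo)
    (hA : ∀ l : ℝ, A l = ∑' j : ℕ, Complex.exp (Complex.I * (j : ℂ) * (l : ℂ)) • a j)
    (l : ℝ) : ‖A l‖ ≤ ∑' j, ‖a j‖ := by
  rw [hA l]
  refine (norm_tsum_le_tsum_norm ?_).trans (le_of_eq ?_)
  · exact ha1.congr fun j => by rw [norm_smul, norm_exp_I_mul, one_mul]
  · exact tsum_congr fun j => by rw [norm_smul, norm_exp_I_mul, one_mul]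

lemma A_memLp (a : ℕ → Elltwo) (ha1 : Summable fun j : ℕ => ‖a j‖) (A : ℝ → Elltwo)
    (hA : ∀ l : ℝ, A l = ∑' j : ℕ, Complex.exp (Complex.I * (j : ℂ) * (l : ℂ)) • a j) :
    MemLp A 2 pmeas := by
  refine MemLp.of_bound ((A_cont a ha1 A hA).aestronglyMeasurable) (∑' j, ‖a j‖) ?_
  exact Filter.Eventually.of_forall (A_norm_le a ha1 A hA)

def psif (t : ℕ) : ℝ → ℂ := fun l => Complex.exp (Complex.I * (t : ℂ) * (l : ℂ))

lemma psif_norm (t : ℕ) (l : ℝ) : ‖psif t l‖ = 1 := by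
  rw [psif, Complex.norm_exp]
  simp [Complex.mul_re]

lemma psif_memLp (t : ℕ) : MemLp (psif t) 2 pmeas := by
  refine MemLp.of_bound ?_ 1 (Filter.Eventually.of_forall fun l => (psif_norm t l).le)
  exact (Continuous.aestronglyMeasurable (by unfold psif; continuity))

def von (t : ℕ) : Lp ℂ 2 pmeas :=
  (((Real.sqrt (2 * Real.pi) : ℝ) : ℂ))⁻¹ • (psif_memLp t).toLp (psif t)

lemma conj_psif (t : ℕ) (l : ℝ) : conj (psif t l) = Complex.exp (-Complex.I * (t:ℂ) * (l:ℂ)) := by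
  rw [psif, ← Complex.exp_conj]
  congr 1
  simp [map_mul, Complex.conj_I, Complex.conj_natCast, Complex.conj_ofReal]

lemma inner_toLp_eq (f : ℝ → ℂ) (hf : MemLp f 2 pmeas) (t : ℕ) :
    ⟪(psif_memLp t).toLp (psif t), hf.toLp f⟫_ℂ
      = ∫ l, Complex.exp (-Complex.I * (t:ℂ) * (l:ℂ)) * f l ∂pmeas := by
  rw [MeasureTheory.L2.inner_def]
  refine integral_congr_ae ?_
  filter_upwards [(psif_memLp t).coeFn_toLp, hf.coeFn_toLp] with l h1 h2
  rw [h1, h2, RCLike.inner_apply, conj_psif, mul_comm]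

lemma vv_orth : Orthonormal ℂ von := by
  rw [orthonormal_iff_ite]
  intro t t'
  have h2pi : (0:ℝ) < 2 * Real.pi := by positivity
  rw [von, von, inner_smul_left, inner_smul_right, MeasureTheory.L2.inner_def]
  have : (∫ l, ⟪((psif_memLp t).toLp (psif t) : Lp ℂ 2 pmeas) l,
        ((psif_memLp t').toLp (psif t') : Lp ℂ 2 pmeas) l⟫_ℂ ∂pmeas)
      = ∫ l, Complex.exp (Complex.I * (((t':ℤ) - (t:ℤ) : ℤ) : ℂ) * (l : ℂ)) ∂pmeas := by
    refine integral_congr_ae ?_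
    filter_upwards [(psif_memLp t).coeFn_toLp, (psif_memLp t').coeFn_toLp] with l h1 h2
    rw [h1, h2, RCLike.inner_apply, conj_psif, psif, ← Complex.exp_add]
    congr 1
    push_cast
    ring
  rw [this, exp_orth]
  rcases eq_or_ne t t' with rfl | hne
  · rw [if_pos (sub_self ((t:ℤ))), if_pos rfl]
    rw [map_inv₀, Complex.conj_ofReal]
    rw [show ((Real.sqrt (2*Real.pi) : ℝ) : ℂ)⁻¹ * ((((Real.sqrt (2*Real.pi) : ℝ) : ℂ))⁻¹ * ((2 * Real.pi : ℝ) : ℂ)) = (((Real.sqrt (2*Real.pi) * Real.sqrt (2*Real.pi) : ℝ) : ℂ))⁻¹ * ((2 * Real.pi : ℝ):ℂ) by push_cast; ring]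
    rw [Real.mul_self_sqrt h2pi.le]
    rw [← Complex.ofReal_inv, ← Complex.ofReal_mul, inv_mul_cancel₀ h2pi.ne']
    norm_num
  · rw [if_neg (by simpa using sub_ne_zero.mpr (Ne.symm (fun hh => hne (by exact_mod_cast hh)))), if_neg hne]
    simp

lemma norm_inner_von (f : ℝ → ℂ) (hf : MemLp f 2 pmeas) (t : ℕ) :
    ‖⟪von t, hf.toLp f⟫_ℂ‖ ^ 2
      = (2 * Real.pi)⁻¹ * ‖∫ l, Complex.exp (-Complex.I * (t:ℂ) * (l:ℂ)) * f l ∂pmeas‖ ^ 2 := by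
  rw [von, inner_smul_left, inner_toLp_eq f hf t, norm_mul, map_inv₀, Complex.conj_ofReal,
    norm_inv, Complex.norm_real, Real.norm_eq_abs,
    _root_.abs_of_nonneg (Real.sqrt_nonneg _), mul_pow, ← Real.sqrt_inv, Real.sq_sqrt (by positivity)]

lemma lintegral_norm_sq_eq (f : ℝ → ℂ) (hf : MemLp f 2 pmeas) :
    ENNReal.ofReal (‖hf.toLp f‖ ^ 2) = ∫⁻ l, ENNReal.ofReal (‖f l‖ ^ 2) ∂pmeas := by
  have hL : (∫⁻ l, (‖f l‖₊ : ℝ≥0∞) ^ (2:ℝ) ∂pmeas) ≠ ∞ := by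
    have h2 := hf.2
    rw [MeasureTheory.eLpNorm_eq_lintegral_rpow_enorm_toReal (by norm_num) (by norm_num)] at h2
    simp only [ENNReal.toReal_ofNat, enorm_eq_nnnorm] at h2
    intro hcon
    rw [hcon] at h2
    simp [ENNReal.top_rpow_of_pos] at h2
  have hnorm : ‖hf.toLp f‖ = ((∫⁻ l, (‖f l‖₊ : ℝ≥0∞) ^ (2:ℝ) ∂pmeas) ^ (1/(2:ℝ))).toReal := by
    rw [MeasureTheory.Lp.norm_toLp, MeasureTheory.eLpNorm_eq_lintegral_rpow_enorm_toReal (by norm_num) (by norm_num)]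
    simp [enorm_eq_nnnorm]
  rw [hnorm, ← ENNReal.toReal_pow, ← ENNReal.rpow_natCast (_ ^ (1/(2:ℝ))) 2, ← ENNReal.rpow_mul]
  have h1 : (1/(2:ℝ)) * ((2:ℕ):ℝ) = 1 := by norm_num
  rw [h1, ENNReal.rpow_one, ENNReal.ofReal_toReal hL]
  refine lintegral_congr fun l => ?_
  rw [ENNReal.ofReal_pow (norm_nonneg _), ofReal_norm, enorm_eq_nnnorm,
    ← ENNReal.rpow_natCast (‖f l‖₊ : ℝ≥0∞) 2]
  norm_num

lemma bessel_main (f : ℝ → ℂ) (hf : MemLp f 2 pmeas) :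
    Summable (fun t : ℕ => ‖∫ l, Complex.exp (-Complex.I * (t:ℂ) * (l:ℂ)) * f l ∂pmeas‖ ^ 2) ∧
    ENNReal.ofReal (∑' t : ℕ, ‖∫ l, Complex.exp (-Complex.I * (t:ℂ) * (l:ℂ)) * f l ∂pmeas‖ ^ 2)
      ≤ ENNReal.ofReal (2 * Real.pi) * ∫⁻ l, ENNReal.ofReal (‖f l‖ ^ 2) ∂pmeas := by
  have h2pi : (0:ℝ) < 2 * Real.pi := by positivity
  set c : ℕ → ℝ := fun t => ‖∫ l, Complex.exp (-Complex.I * (t:ℂ) * (l:ℂ)) * f l ∂pmeas‖ ^ 2 with hc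
  have hsummable : Summable (fun t => (2*Real.pi)⁻¹ * c t) := by
    have := vv_orth.inner_products_summable (hf.toLp f)
    exact this.congr fun t => norm_inner_von f hf t
  have hsum : Summable c := by
    have := hsummable.mul_left (2*Real.pi)
    refine this.congr fun t => ?_
    field_simp
  refine ⟨hsum, ?_⟩
  have hbessel := vv_orth.tsum_inner_products_le (hf.toLp f)
  have htsum_eq : (∑' t, ‖⟪von t, hf.toLp f⟫_ℂ‖ ^ 2) = (2*Real.pi)⁻¹ * ∑' t, c t := by
    rw [← tsum_mul_left]
    exact tsum_congr fun t => norm_inner_von f hf t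
  rw [htsum_eq] at hbessel
  have hfinal : (∑' t, c t) ≤ 2 * Real.pi * ‖hf.toLp f‖ ^ 2 := by
    calc (∑' t, c t) = 2 * Real.pi * ((2*Real.pi)⁻¹ * ∑' t, c t) := by field_simp
    _ ≤ 2 * Real.pi * ‖hf.toLp f‖ ^ 2 := by
        exact mul_le_mul_of_nonneg_left hbessel h2pi.le
  calc ENNReal.ofReal (∑' t, c t) ≤ ENNReal.ofReal (2 * Real.pi * ‖hf.toLp f‖ ^ 2) :=
        ENNReal.ofReal_le_ofReal hfinal
  _ = ENNReal.ofReal (2 * Real.pi) * ENNReal.ofReal (‖hf.toLp f‖ ^ 2) :=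
        ENNReal.ofReal_mul h2pi.le
  _ = ENNReal.ofReal (2 * Real.pi) * ∫⁻ l, ENNReal.ofReal (‖f l‖ ^ 2) ∂pmeas := by
        rw [lintegral_norm_sq_eq f hf]

lemma exp_int_cont (n : ℤ) : Continuous (fun l : ℝ => Complex.exp (Complex.I * (n:ℂ) * (l:ℂ))) := by
  continuity

lemma norm_exp_int (n : ℤ) (l : ℝ) : ‖Complex.exp (Complex.I * (n:ℂ) * (l:ℂ))‖ = 1 := by
  rw [Complex.norm_exp]
  simp [Complex.mul_re]

lemma exp_int_memLp (n : ℤ) : MemLp (fun l : ℝ => Complex.exp (Complex.I * (n:ℂ) * (l:ℂ))) ∞ pmeas := by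
  refine memLp_top_of_bound (exp_int_cont n).aestronglyMeasurable 1
    (Filter.Eventually.of_forall fun l => (norm_exp_int n l).le)

lemma exp_int_integrable (n : ℤ) : Integrable (fun l : ℝ => Complex.exp (Complex.I * (n:ℂ) * (l:ℂ))) pmeas := by
  refine Integrable.mono' (integrable_const 1) (exp_int_cont n).aestronglyMeasurable
    (Filter.Eventually.of_forall fun l => (norm_exp_int n l).le)

-- the key vector-valued integral against A
lemma vintA (a : ℕ → Elltwo) (ha1 : Summable fun j : ℕ => ‖a j‖) (A : ℝ → Elltwo)
    (hA : ∀ l : ℝ, A l = ∑' j : ℕ, Complex.exp (Complex.I * (j : ℂ) * (l : ℂ)) • a j)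
    (m : ℕ) :
    (∫ l, Complex.exp (-Complex.I * (m:ℂ) * (l:ℂ)) • A l ∂pmeas)
      = ((2 * Real.pi : ℝ) : ℂ) • a m := by
  have hptwise : ∀ l : ℝ, Complex.exp (-Complex.I * (m:ℂ) * (l:ℂ)) • A l
      = ∑' j : ℕ, Complex.exp (Complex.I * (((j:ℤ) - (m:ℤ) : ℤ):ℂ) * (l:ℂ)) • a j := by
    intro l
    rw [hA l, ← tsum_const_smul'']
    refine tsum_congr fun j => ?_
    rw [smul_smul, ← Complex.exp_add]
    congr 2
    push_cast
    ring
  have hint : ∀ j : ℕ, Integrable (fun l : ℝ =>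
      Complex.exp (Complex.I * (((j:ℤ) - (m:ℤ) : ℤ):ℂ) * (l:ℂ)) • a j) pmeas :=
    fun j => (exp_int_integrable _).smul_const (a j)
  have hswap : (∫ l, (∑' j : ℕ, Complex.exp (Complex.I * (((j:ℤ) - (m:ℤ) : ℤ):ℂ) * (l:ℂ)) • a j) ∂pmeas)
      = ∑' j : ℕ, ∫ l, Complex.exp (Complex.I * (((j:ℤ) - (m:ℤ) : ℤ):ℂ) * (l:ℂ)) • a j ∂pmeas := by
    refine (integral_tsum_of_summable_integral_norm hint ?_).symm
    refine Summable.of_nonneg_of_le (fun j => integral_nonneg fun l => norm_nonneg _)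
      (fun j => ?_) (ha1.mul_left (2*Real.pi))
    have : ∀ l : ℝ, ‖Complex.exp (Complex.I * (((j:ℤ) - (m:ℤ) : ℤ):ℂ) * (l:ℂ)) • a j‖ = ‖a j‖ := by
      intro l; rw [norm_smul, norm_exp_int, one_mul]
    rw [integral_congr_ae (Filter.Eventually.of_forall this), integral_const]
    simp only [smul_eq_mul]
    have hm : pmeas.real Set.univ = 2 * Real.pi := by
      rw [measureReal_def, pmeas, Measure.restrict_apply_univ, Real.volume_Ico,
        ENNReal.toReal_ofReal (by linarith [Real.pi_pos])]
      ring
    rw [hm]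
  have hper : ∀ j : ℕ, (∫ l, Complex.exp (Complex.I * (((j:ℤ) - (m:ℤ) : ℤ):ℂ) * (l:ℂ)) • a j ∂pmeas)
      = (if j = m then ((2 * Real.pi : ℝ) : ℂ) else 0) • a j := by
    intro j
    rw [integral_smul_const, exp_orth]
    congr 1
    by_cases hj : j = m
    · subst hj
      simp
    · rw [if_neg ?_, if_neg hj]
      intro hc
      exact hj (Nat.cast_inj.mp (sub_eq_zero.mp hc))
  calc (∫ l, Complex.exp (-Complex.I * (m:ℂ) * (l:ℂ)) • A l ∂pmeas)
      = ∫ l, (∑' j : ℕ, Complex.exp (Complex.I * (((j:ℤ) - (m:ℤ) : ℤ):ℂ) * (l:ℂ)) • a j) ∂pmeas :=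
        integral_congr_ae (Filter.Eventually.of_forall hptwise)
    _ = ∑' j : ℕ, ∫ l, Complex.exp (Complex.I * (((j:ℤ) - (m:ℤ) : ℤ):ℂ) * (l:ℂ)) • a j ∂pmeas := hswap
    _ = ∑' j : ℕ, (if j = m then ((2 * Real.pi : ℝ) : ℂ) else 0) • a j := tsum_congr hper
    _ = ((2 * Real.pi : ℝ) : ℂ) • a m := by
        rw [tsum_eq_single m (fun j hj => by rw [if_neg hj, zero_smul])]
        rw [if_pos rfl]

lemma norm_exp_negnat (m : ℕ) (l : ℝ) : ‖Complex.exp (-Complex.I * (m:ℂ) * (l:ℂ))‖ = 1 := by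
  rw [Complex.norm_exp]
  simp [Complex.mul_re]

lemma exp_negnat_memTop (m : ℕ) :
    MemLp (fun l : ℝ => Complex.exp (-Complex.I * (m:ℂ) * (l:ℂ))) ∞ pmeas := by
  refine memLp_top_of_bound (Continuous.aestronglyMeasurable (by continuity)) 1
    (Filter.Eventually.of_forall fun l => (norm_exp_negnat m l).le)

-- combined: the m-th Fourier coefficient of g = A - h
lemma vintg (a : ℕ → Elltwo) (ha1 : Summable fun j : ℕ => ‖a j‖) (A : ℝ → Elltwo)
    (hA : ∀ l : ℝ, A l = ∑' j : ℕ, Complex.exp (Complex.I * (j : ℂ) * (l : ℂ)) • a j)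
    (hAi : Integrable A pmeas)
    (h : ℝ → Elltwo) (hhi : Integrable h pmeas)
    (hh0 : ∀ j : ℤ, 0 ≤ j →
      (∫ l, Complex.exp (-Complex.I * (j : ℂ) * (l : ℂ)) • h l ∂pmeas) = 0)
    (m : ℕ) :
    (∫ l, Complex.exp (-Complex.I * (m:ℂ) * (l:ℂ)) • (A l - h l) ∂pmeas)
      = ((2 * Real.pi : ℝ) : ℂ) • a m := by
  have hsub : ∀ l : ℝ, Complex.exp (-Complex.I * (m:ℂ) * (l:ℂ)) • (A l - h l)
      = Complex.exp (-Complex.I * (m:ℂ) * (l:ℂ)) • A l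
        - Complex.exp (-Complex.I * (m:ℂ) * (l:ℂ)) • h l := fun l => smul_sub _ _ _
  have hiA : Integrable (fun l : ℝ => Complex.exp (-Complex.I * (m:ℂ) * (l:ℂ)) • A l) pmeas :=
    hAi.smul_of_top_right (exp_negnat_memTop m)
  have hih : Integrable (fun l : ℝ => Complex.exp (-Complex.I * (m:ℂ) * (l:ℂ)) • h l) pmeas :=
    hhi.smul_of_top_right (exp_negnat_memTop m)
  rw [integral_congr_ae (Filter.Eventually.of_forall hsub), integral_sub hiA hih]
  have hz : (∫ l, Complex.exp (-Complex.I * (m:ℂ) * (l:ℂ)) • h l ∂pmeas) = 0 := by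
    have := hh0 (m : ℤ) (Int.ofNat_nonneg m)
    simpa using this
  rw [hz, sub_zero, vintA a ha1 A hA m]


lemma coeff_eq (e : ℕ → Elltwo) (he : Summable fun u => ‖e u‖)
    (g : ℝ → Elltwo) (hgi : Integrable g pmeas)
    (a : ℕ → Elltwo)
    (hg0 : ∀ m : ℕ, (∫ l, Complex.exp (-Complex.I * (m:ℂ) * (l:ℂ)) • g l ∂pmeas)
      = ((2 * Real.pi : ℝ) : ℂ) • a m)
    (t : ℕ) :
    (∫ l, Complex.exp (-Complex.I * (t:ℂ) * (l:ℂ))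
        * (∑' u : ℕ, Complex.exp (-Complex.I * (u:ℂ) * (l:ℂ)) * ⟪star (e u), g l⟫) ∂pmeas)
      = ((2 * Real.pi : ℝ) : ℂ) * ∑' u : ℕ, ⟪star (e u), a (u + t)⟫ := by
  have hsummand : ∀ l : ℝ, Summable fun u : ℕ =>
      Complex.exp (-Complex.I * (u:ℂ) * (l:ℂ)) * ⟪star (e u), g l⟫ := by
    intro l
    refine Summable.of_norm (Summable.of_nonneg_of_le (fun u => norm_nonneg _)
      (fun u => ?_) (he.mul_right ‖g l‖))
    rw [norm_mul, norm_exp_negnat, one_mul]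
    calc ‖⟪star (e u), g l⟫‖ ≤ ‖star (e u)‖ * ‖g l‖ := norm_inner_le_norm _ _
      _ = ‖e u‖ * ‖g l‖ := by rw [norm_star]
  have hptwise : ∀ l : ℝ, Complex.exp (-Complex.I * (t:ℂ) * (l:ℂ))
        * (∑' u : ℕ, Complex.exp (-Complex.I * (u:ℂ) * (l:ℂ)) * ⟪star (e u), g l⟫)
      = ∑' u : ℕ, ⟪star (e u), Complex.exp (-Complex.I * ((u+t:ℕ):ℂ) * (l:ℂ)) • g l⟫ := by
    intro l
    rw [← tsum_mul_left]
    refine tsum_congr fun u => ?_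
    rw [inner_smul_right, ← mul_assoc, ← Complex.exp_add]
    congr 2
    push_cast
    ring
  have hIu : ∀ u : ℕ, Integrable
      (fun l : ℝ => Complex.exp (-Complex.I * ((u+t:ℕ):ℂ) * (l:ℂ)) • g l) pmeas :=
    fun u => hgi.smul_of_top_right (exp_negnat_memTop (u+t))
  have hswap : (∫ l, (∑' u : ℕ, ⟪star (e u),
        Complex.exp (-Complex.I * ((u+t:ℕ):ℂ) * (l:ℂ)) • g l⟫) ∂pmeas)
      = ∑' u : ℕ, ∫ l, ⟪star (e u),
        Complex.exp (-Complex.I * ((u+t:ℕ):ℂ) * (l:ℂ)) • g l⟫ ∂pmeas := by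
    refine (integral_tsum_of_summable_integral_norm
      (fun u => (hIu u).const_inner _) ?_).symm
    refine Summable.of_nonneg_of_le (fun u => integral_nonneg fun l => norm_nonneg _)
      (fun u => ?_) (he.mul_right (∫ l, ‖g l‖ ∂pmeas))
    have hb : ∀ l : ℝ, ‖⟪star (e u), Complex.exp (-Complex.I * ((u+t:ℕ):ℂ) * (l:ℂ)) • g l⟫‖
        ≤ ‖e u‖ * ‖g l‖ := by
      intro l
      calc ‖⟪star (e u), Complex.exp (-Complex.I * ((u+t:ℕ):ℂ) * (l:ℂ)) • g l⟫‖
          ≤ ‖star (e u)‖ * ‖Complex.exp (-Complex.I * ((u+t:ℕ):ℂ) * (l:ℂ)) • g l‖ :=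
            norm_inner_le_norm _ _
        _ = ‖e u‖ * ‖g l‖ := by rw [norm_star, norm_smul, norm_exp_negnat, one_mul]
    calc (∫ l, ‖⟪star (e u), Complex.exp (-Complex.I * ((u+t:ℕ):ℂ) * (l:ℂ)) • g l⟫‖ ∂pmeas)
        ≤ ∫ l, ‖e u‖ * ‖g l‖ ∂pmeas := by
          refine integral_mono ((hIu u).const_inner _).norm (hgi.norm.const_mul _) hb
      _ = ‖e u‖ * ∫ l, ‖g l‖ ∂pmeas := by rw [integral_const_mul]
  have hper : ∀ u : ℕ, (∫ l, ⟪star (e u),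
        Complex.exp (-Complex.I * ((u+t:ℕ):ℂ) * (l:ℂ)) • g l⟫ ∂pmeas)
      = ((2 * Real.pi : ℝ) : ℂ) * ⟪star (e u), a (u + t)⟫ := by
    intro u
    rw [integral_inner (hIu u), hg0 (u+t), inner_smul_right]
  calc (∫ l, Complex.exp (-Complex.I * (t:ℂ) * (l:ℂ))
        * (∑' u : ℕ, Complex.exp (-Complex.I * (u:ℂ) * (l:ℂ)) * ⟪star (e u), g l⟫) ∂pmeas)
      = ∫ l, (∑' u : ℕ, ⟪star (e u),
          Complex.exp (-Complex.I * ((u+t:ℕ):ℂ) * (l:ℂ)) • g l⟫) ∂pmeas :=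
        integral_congr_ae (Filter.Eventually.of_forall hptwise)
    _ = ∑' u : ℕ, ∫ l, ⟪star (e u),
          Complex.exp (-Complex.I * ((u+t:ℕ):ℂ) * (l:ℂ)) • g l⟫ ∂pmeas := hswap
    _ = ∑' u : ℕ, ((2 * Real.pi : ℝ) : ℂ) * ⟪star (e u), a (u + t)⟫ := tsum_congr hper
    _ = ((2 * Real.pi : ℝ) : ℂ) * ∑' u : ℕ, ⟪star (e u), a (u + t)⟫ := tsum_mul_left

lemma Fcomp_aesm (e : ℕ → Elltwo) (he : Summable fun u => ‖e u‖)
    (g : ℝ → Elltwo) (hg : AEStronglyMeasurable g pmeas) :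
    AEStronglyMeasurable
      (fun l : ℝ => ∑' u : ℕ, Complex.exp (-Complex.I * (u:ℂ) * (l:ℂ)) * ⟪star (e u), g l⟫)
      pmeas := by
  have hterm : ∀ u : ℕ, AEStronglyMeasurable
      (fun l : ℝ => Complex.exp (-Complex.I * (u:ℂ) * (l:ℂ)) * ⟪star (e u), g l⟫) pmeas := by
    intro u
    exact (Continuous.aestronglyMeasurable (by continuity)).mul
      (AEStronglyMeasurable.inner aestronglyMeasurable_const hg)
  refine aestronglyMeasurable_of_tendsto_ae (f := fun (n : ℕ) (l : ℝ) =>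
      ∑ u ∈ Finset.range n, Complex.exp (-Complex.I * (u:ℂ) * (l:ℂ)) * ⟪star (e u), g l⟫)
    Filter.atTop (fun n => Finset.aestronglyMeasurable_fun_sum _ fun u _ => hterm u) ?_
  refine Filter.Eventually.of_forall fun l => ?_
  have hsummand : Summable fun u : ℕ =>
      Complex.exp (-Complex.I * (u:ℂ) * (l:ℂ)) * ⟪star (e u), g l⟫ := by
    refine Summable.of_norm (Summable.of_nonneg_of_le (fun u => norm_nonneg _)
      (fun u => ?_) (he.mul_right ‖g l‖))
    rw [norm_mul, norm_exp_negnat, one_mul]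
    calc ‖⟪star (e u), g l⟫‖ ≤ ‖star (e u)‖ * ‖g l‖ := norm_inner_le_norm _ _
      _ = ‖e u‖ * ‖g l‖ := by rw [norm_star]
  exact hsummand.hasSum.tendsto_sum_nat

lemma Fcomp_memLp (e : ℕ → Elltwo) (he : Summable fun u => ‖e u‖)
    (g : ℝ → Elltwo) (hg : MemLp g 2 pmeas) :
    MemLp (fun l : ℝ => ∑' u : ℕ, Complex.exp (-Complex.I * (u:ℂ) * (l:ℂ)) * ⟪star (e u), g l⟫)
      2 pmeas := by
  have hnorm : ∀ l : ℝ,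
      ‖∑' u : ℕ, Complex.exp (-Complex.I * (u:ℂ) * (l:ℂ)) * ⟪star (e u), g l⟫‖
        ≤ (∑' u, ‖e u‖) * ‖g l‖ := by
    intro l
    have hb : ∀ u : ℕ, ‖Complex.exp (-Complex.I * (u:ℂ) * (l:ℂ)) * ⟪star (e u), g l⟫‖
        ≤ ‖e u‖ * ‖g l‖ := by
      intro u
      rw [norm_mul, norm_exp_negnat, one_mul]
      calc ‖⟪star (e u), g l⟫‖ ≤ ‖star (e u)‖ * ‖g l‖ := norm_inner_le_norm _ _
        _ = ‖e u‖ * ‖g l‖ := by rw [norm_star]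
    have hs2 : Summable fun u : ℕ =>
        ‖Complex.exp (-Complex.I * (u:ℂ) * (l:ℂ)) * ⟪star (e u), g l⟫‖ :=
      Summable.of_nonneg_of_le (fun u => norm_nonneg _) hb (he.mul_right ‖g l‖)
    calc ‖∑' u : ℕ, Complex.exp (-Complex.I * (u:ℂ) * (l:ℂ)) * ⟪star (e u), g l⟫‖
        ≤ ∑' u : ℕ, ‖Complex.exp (-Complex.I * (u:ℂ) * (l:ℂ)) * ⟪star (e u), g l⟫‖ :=
          norm_tsum_le_tsum_norm hs2
      _ ≤ ∑' u, ‖e u‖ * ‖g l‖ := Summable.tsum_le_tsum hb hs2 (he.mul_right ‖g l‖)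
      _ = (∑' u, ‖e u‖) * ‖g l‖ := tsum_mul_right
  refine MemLp.of_le (hg.norm.const_mul (∑' u, ‖e u‖)) (Fcomp_aesm e he g hg.1) ?_
  refine Filter.Eventually.of_forall fun l => ?_
  refine (hnorm l).trans ?_
  rw [Real.norm_eq_abs]
  exact le_abs_self _

end Aux

/- STATEMENT 8: factorization lower bound.  With `d(u)` (columns `d(u)_r ∈ ℓ²`,
`Σ_u ‖d(u)‖_{HS} < ∞`) the coefficients of a canonical factorization,
`s_t = Σ_p d(p)ᵀ a_{p+t} ∈ ℂ^M`, all defining series converge absolutely,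
`Σ_t ‖s_t‖² < ∞`, and for every negative-frequency `h`,
`(1/2π)∫ ‖Σ_u e^{-iuλ} d(u)ᵀ(A(λ)-h(λ))‖² dλ ≥ Σ_t ‖s_t‖²` (integral in `[0,∞]`). -/
theorem factorization_lower_bound
    (M : ℕ) (hM : 1 ≤ M)
    (d : ℕ → Fin M → Elltwo)
    (hd : Summable fun u : ℕ => Real.sqrt (∑ r : Fin M, ‖d u r‖ ^ 2))
    (a : ℕ → Elltwo)
    (ha1 : Summable fun j : ℕ => ‖a j‖)
    (ha2 : Summable fun j : ℕ => ((j : ℝ) + 1) * ‖a j‖ ^ 2)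
    (A : ℝ → Elltwo)
    (hA : ∀ l : ℝ, A l = ∑' j : ℕ, Complex.exp (Complex.I * (j : ℂ) * (l : ℂ)) • a j)
    (s : ℕ → EuclideanSpace ℂ (Fin M))
    (hs : ∀ (t : ℕ) (r : Fin M),
      s t r = ∑' p : ℕ, ∑' k : ℕ, d p r k * a (p + t) k) :
    (∀ (t p : ℕ) (r : Fin M), Summable fun k : ℕ => ‖d p r k * a (p + t) k‖) ∧
    (∀ (t : ℕ) (r : Fin M), Summable fun p : ℕ => ‖∑' k : ℕ, d p r k * a (p + t) k‖) ∧
    (Summable fun t : ℕ => ‖s t‖ ^ 2) ∧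
    ∀ h : ℝ → Elltwo, NegFreq h →
      ENNReal.ofReal (∑' t : ℕ, ‖s t‖ ^ 2) ≤
        ENNReal.ofReal (1 / (2 * Real.pi)) *
          ∫⁻ l, ENNReal.ofReal
            (‖(show EuclideanSpace ℂ (Fin M) from WithLp.toLp 2 fun r : Fin M =>
                ∑' u : ℕ, Complex.exp (-Complex.I * (u : ℂ) * (l : ℂ)) *
                  ∑' k : ℕ, d u r k * (A l - h l) k)‖ ^ 2) ∂pmeas := by
  have h2pi : (0:ℝ) < 2 * Real.pi := by positivity
  -- column norms are summable
  have hDr : ∀ (u : ℕ) (r : Fin M), ‖d u r‖ ≤ Real.sqrt (∑ r' : Fin M, ‖d u r'‖ ^ 2) := by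
    intro u r
    rw [show ‖d u r‖ = Real.sqrt (‖d u r‖^2) from (Real.sqrt_sq (norm_nonneg _)).symm]
    exact Real.sqrt_le_sqrt (Finset.single_le_sum
      (f := fun r' => ‖d u r'‖^2) (fun i _ => sq_nonneg _) (Finset.mem_univ r))
  have hcol : ∀ r : Fin M, Summable fun u => ‖d u r‖ := fun r =>
    Summable.of_nonneg_of_le (fun u => norm_nonneg _) (fun u => hDr u r) hd
  -- part 1
  have part1 : ∀ (t p : ℕ) (r : Fin M), Summable fun k : ℕ => ‖d p r k * a (p + t) k‖ :=
    fun t p r => (mul_norm_summ (d p r) (a (p+t))).congr fun k => (norm_mul _ _).symm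
  -- part 2
  have haC : ∀ j, ‖a j‖ ≤ ∑' i, ‖a i‖ := fun j => ha1.le_tsum j fun i _ => norm_nonneg _
  have part2 : ∀ (t : ℕ) (r : Fin M), Summable fun p : ℕ => ‖∑' k : ℕ, d p r k * a (p + t) k‖ := by
    intro t r
    refine Summable.of_nonneg_of_le (fun p => norm_nonneg _) (fun p => ?_)
      ((hcol r).mul_right (∑' i, ‖a i‖))
    calc ‖∑' k : ℕ, d p r k * a (p+t) k‖ ≤ ‖d p r‖ * ‖a (p+t)‖ := norm_tsum_mul_le _ _
      _ ≤ ‖d p r‖ * ∑' i, ‖a i‖ := mul_le_mul_of_nonneg_left (haC _) (norm_nonneg _)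
  -- the main Bessel-type bound, for a generic "spectral" function g
  have main : ∀ g : ℝ → Elltwo, MemLp g 2 pmeas →
      (∀ m : ℕ, (∫ l, Complex.exp (-Complex.I * (m:ℂ) * (l:ℂ)) • g l ∂pmeas)
        = ((2 * Real.pi : ℝ) : ℂ) • a m) →
      ∀ r : Fin M,
        Summable (fun t : ℕ => ‖s t r‖^2) ∧
        ENNReal.ofReal (∑' t : ℕ, ‖s t r‖^2) ≤ ENNReal.ofReal (1/(2*Real.pi)) *
          ∫⁻ l : ℝ, ENNReal.ofReal
            (‖∑' u : ℕ, Complex.exp (-Complex.I*(u:ℂ)*(l:ℂ)) * ⟪star (d u r), g l⟫_ℂ‖^2) ∂pmeas := by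
    intro g hg2 hg0 r
    have hgi : Integrable g pmeas :=
      memLp_one_iff_integrable.mp (hg2.mono_exponent (by norm_num))
    have hmem := Fcomp_memLp (fun u => d u r) (hcol r) g hg2
    have hbes := bessel_main _ hmem
    have hco : ∀ t : ℕ, (∫ l, Complex.exp (-Complex.I * (t:ℂ) * (l:ℂ))
        * (∑' u : ℕ, Complex.exp (-Complex.I*(u:ℂ)*(l:ℂ)) * ⟪star (d u r), g l⟫_ℂ) ∂pmeas)
        = ((2 * Real.pi : ℝ) : ℂ) * s t r := by
      intro t
      rw [coeff_eq (fun u => d u r) (hcol r) g hgi a hg0 t]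
      congr 1
      rw [hs t r]
      exact tsum_congr fun u => inner_star_eq (d u r) (a (u+t))
    have hnco : ∀ t : ℕ, ‖∫ l, Complex.exp (-Complex.I * (t:ℂ) * (l:ℂ))
        * (∑' u : ℕ, Complex.exp (-Complex.I*(u:ℂ)*(l:ℂ)) * ⟪star (d u r), g l⟫_ℂ) ∂pmeas‖^2
        = (2*Real.pi)^2 * ‖s t r‖^2 := by
      intro t
      rw [hco t, norm_mul, Complex.norm_real, Real.norm_eq_abs, _root_.abs_of_nonneg h2pi.le,
        mul_pow]
    have hsum1 : Summable (fun t : ℕ => (2*Real.pi)^2 * ‖s t r‖^2) :=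
      hbes.1.congr fun t => hnco t
    have hsumr : Summable (fun t : ℕ => ‖s t r‖^2) := by
      have := hsum1.mul_left ((2*Real.pi)^2)⁻¹
      refine this.congr fun t => ?_
      field_simp
    refine ⟨hsumr, ?_⟩
    have hineq := hbes.2
    rw [tsum_congr hnco, tsum_mul_left, ENNReal.ofReal_mul (by positivity)] at hineq
    -- hineq : ofReal((2π)^2) * ofReal (Σ ‖s t r‖²) ≤ ofReal(2π) * ∫⁻ ...
    have hstep : ENNReal.ofReal (∑' t : ℕ, ‖s t r‖^2)
        = ENNReal.ofReal (1/(2*Real.pi)^2) *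
          (ENNReal.ofReal ((2*Real.pi)^2) * ENNReal.ofReal (∑' t : ℕ, ‖s t r‖^2)) := by
      rw [← mul_assoc, ← ENNReal.ofReal_mul (by positivity)]
      rw [show (1/(2*Real.pi)^2) * (2*Real.pi)^2 = 1 by field_simp]
      rw [ENNReal.ofReal_one, one_mul]
    rw [hstep]
    calc ENNReal.ofReal (1/(2*Real.pi)^2) *
          (ENNReal.ofReal ((2*Real.pi)^2) * ENNReal.ofReal (∑' t : ℕ, ‖s t r‖^2))
        ≤ ENNReal.ofReal (1/(2*Real.pi)^2) * (ENNReal.ofReal (2 * Real.pi) *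
            ∫⁻ l : ℝ, ENNReal.ofReal
              (‖∑' u : ℕ, Complex.exp (-Complex.I*(u:ℂ)*(l:ℂ)) * ⟪star (d u r), g l⟫_ℂ‖^2) ∂pmeas) :=
          mul_le_mul_right hineq _
      _ = ENNReal.ofReal (1/(2*Real.pi)) *
            ∫⁻ l : ℝ, ENNReal.ofReal
              (‖∑' u : ℕ, Complex.exp (-Complex.I*(u:ℂ)*(l:ℂ)) * ⟪star (d u r), g l⟫_ℂ‖^2) ∂pmeas := by
          rw [← mul_assoc, ← ENNReal.ofReal_mul (by positivity)]
          congr 2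
          field_simp
  -- instantiate with g = A to get part 3
  have hA2 : MemLp A 2 pmeas := A_memLp a ha1 A hA
  have mainA := main A hA2 (vintA a ha1 A hA)
  have hst_eq : ∀ t : ℕ, ‖s t‖^2 = ∑ r : Fin M, ‖s t r‖^2 := by
    intro t
    rw [EuclideanSpace.norm_eq, Real.sq_sqrt (Finset.sum_nonneg fun i _ => sq_nonneg _)]
  have part3 : Summable fun t : ℕ => ‖s t‖ ^ 2 := by
    refine (summable_sum (s := Finset.univ) fun r _ => (mainA r).1).congr fun t => ?_
    exact (hst_eq t).symm
  refine ⟨part1, part2, part3, ?_⟩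
  -- part 4
  rintro h ⟨hh1, hh2⟩
  set g : ℝ → Elltwo := fun l => A l - h l with hgdef
  have hg2 : MemLp g 2 pmeas := hA2.sub hh1
  have hAi : Integrable A pmeas :=
    memLp_one_iff_integrable.mp (hA2.mono_exponent (by norm_num))
  have hhi : Integrable h pmeas :=
    memLp_one_iff_integrable.mp (hh1.mono_exponent (by norm_num))
  have hg0 : ∀ m : ℕ, (∫ l, Complex.exp (-Complex.I * (m:ℂ) * (l:ℂ)) • g l ∂pmeas)
      = ((2 * Real.pi : ℝ) : ℂ) • a m := fun m => vintg a ha1 A hA hAi h hhi hh2 m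
  have maing := main g hg2 hg0
  -- rewrite the goal integrand componentwise
  have hgoal_int : ∀ l : ℝ,
      ENNReal.ofReal (‖(show EuclideanSpace ℂ (Fin M) from WithLp.toLp 2 fun r : Fin M =>
          ∑' u : ℕ, Complex.exp (-Complex.I * (u : ℂ) * (l : ℂ)) *
            ∑' k : ℕ, d u r k * (A l - h l) k)‖ ^ 2)
      = ∑ r : Fin M, ENNReal.ofReal
          (‖∑' u : ℕ, Complex.exp (-Complex.I*(u:ℂ)*(l:ℂ)) * ⟪star (d u r), g l⟫_ℂ‖^2) := by
    intro l
    have hfun : (show EuclideanSpace ℂ (Fin M) from WithLp.toLp 2 fun r : Fin M =>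
          ∑' u : ℕ, Complex.exp (-Complex.I * (u : ℂ) * (l : ℂ)) *
            ∑' k : ℕ, d u r k * (A l - h l) k)
        = WithLp.toLp 2 fun r : Fin M =>
          ∑' u : ℕ, Complex.exp (-Complex.I*(u:ℂ)*(l:ℂ)) * ⟪star (d u r), g l⟫_ℂ := by
      refine congrArg (WithLp.toLp 2) (funext fun r => ?_)
      exact tsum_congr fun u => by rw [inner_star_eq (d u r) (g l)]
    rw [hfun, EuclideanSpace.norm_eq, Real.sq_sqrt (Finset.sum_nonneg fun i _ => sq_nonneg _),
      ENNReal.ofReal_sum_of_nonneg fun i _ => sq_nonneg _]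
  have haesm : ∀ r : Fin M, AEMeasurable (fun l : ℝ => ENNReal.ofReal
      (‖∑' u : ℕ, Complex.exp (-Complex.I*(u:ℂ)*(l:ℂ)) * ⟪star (d u r), g l⟫_ℂ‖^2)) pmeas := by
    intro r
    have := Fcomp_aesm (fun u => d u r) (hcol r) g hg2.1
    exact (this.norm.aemeasurable.pow_const 2).ennreal_ofReal
  have hsplit : (∫⁻ l : ℝ, ENNReal.ofReal
        (‖(show EuclideanSpace ℂ (Fin M) from WithLp.toLp 2 fun r : Fin M =>
            ∑' u : ℕ, Complex.exp (-Complex.I * (u : ℂ) * (l : ℂ)) *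
              ∑' k : ℕ, d u r k * (A l - h l) k)‖ ^ 2) ∂pmeas)
      = ∑ r : Fin M, ∫⁻ l : ℝ, ENNReal.ofReal
          (‖∑' u : ℕ, Complex.exp (-Complex.I*(u:ℂ)*(l:ℂ)) * ⟪star (d u r), g l⟫_ℂ‖^2) ∂pmeas := by
    rw [lintegral_congr hgoal_int]
    exact lintegral_finset_sum' Finset.univ fun r _ => haesm r
  have hlhs : ENNReal.ofReal (∑' t : ℕ, ‖s t‖^2)
      = ∑ r : Fin M, ENNReal.ofReal (∑' t : ℕ, ‖s t r‖^2) := by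
    rw [show (∑' t : ℕ, ‖s t‖^2) = ∑' t : ℕ, ∑ r : Fin M, ‖s t r‖^2 from tsum_congr hst_eq,
      Summable.tsum_finsetSum fun r _ => (mainA r).1,
      ENNReal.ofReal_sum_of_nonneg fun r _ => tsum_nonneg fun t => sq_nonneg _]
  rw [hlhs, hsplit, Finset.mul_sum]
  exact Finset.sum_le_sum fun r _ => (maing r).2
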